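/- Let A be an s×t matrix over an alphabet Γ and let S be an n×t matrix over Γ (so a copy of A in S is determined by a strictly increasing choice of s rows of S, the column map being the identity on the t columns, and two copies are disjoint if and only if their row sets are disjoint). If S contains at least K copies of A, then S contains at least K/(s·n^{s-1}) pairwise-disjoint copies of A. -/

import Mathlib

/-- `(r, c)` is a copy of the `s × t` matrix `A` inside the `m × n` matrix `M`. -/
def IsCopy {Γ : Type*} {s t m n : ℕ} (A : Fin s → Fin t → Γ) (M : Fin m → Fin n → Γ)
    (r : Fin s → Fin m) (c : Fin t → Fin n) : Prop :=
  StrictMono r ∧ StrictMono c ∧ ∀ i j, M (r i) (c j) = A i j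

/-- The number of copies of `A` in `M`. -/
noncomputable def copyCount {Γ : Type*} {s t m n : ℕ} (A : Fin s → Fin t → Γ)
    (M : Fin m → Fin n → Γ) : ℕ :=
  Set.ncard {p : (Fin s → Fin m) × (Fin t → Fin n) | IsCopy A M p.1 p.2}

/-- Let `A` be an `s × t` matrix over `Γ` and `S` an `n × t` matrix over
`Γ`; a copy of `A` in `S` is given by a strictly increasing choice of `s` rows (the column
map being the identity), and copies are disjoint iff their row sets are disjoint. If `S`
contains at least `K` copies of `A`, then it contains at least `K/(s·n^(s-1))`
pairwise-disjoint copies of `A`. -/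
theorem disjoint_copies_in_strip {Γ : Type*} {s t n : ℕ}
    (A : Fin s → Fin t → Γ) (S : Fin n → Fin t → Γ) (K : ℝ)
    (hK : K ≤ (copyCount A S : ℝ)) :
    ∃ D : Finset (Fin s → Fin n),
      (∀ r ∈ D, StrictMono r ∧ ∀ i j, S (r i) j = A i j) ∧
      ((D : Set (Fin s → Fin n)).Pairwise
        fun r r' => Disjoint (Set.range r) (Set.range r')) ∧
      K / ((s : ℝ) * (n : ℝ) ^ (s - 1)) ≤ (D.card : ℝ) := by
  classical
  set Cset : Set (Fin s → Fin n) := {r | StrictMono r ∧ ∀ i j, S (r i) j = A i j} with hCsetdef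
  have hfin : Cset.Finite := Set.toFinite _
  -- copyCount equals the number of valid row maps
  have himg : {p : (Fin s → Fin n) × (Fin t → Fin t) | IsCopy A S p.1 p.2}
      = (fun r => (r, id)) '' Cset := by
    ext ⟨r, c⟩
    constructor
    · rintro ⟨hr, hc, hM⟩
      have hcid : c = id := by
        refine Set.range_injOn_strictMono hc strictMono_id ?_
        rw [Set.range_id]
        exact Set.range_eq_univ.2 ((Finite.injective_iff_surjective).1 hc.injective)
      subst hcid
      exact ⟨r, ⟨hr, fun i j => hM i j⟩, rfl⟩
    · rintro ⟨r', ⟨hr, hM⟩, heq⟩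
      obtain ⟨h1, h2⟩ := Prod.mk.injEq .. ▸ heq
      subst h1; subst h2
      exact ⟨hr, strictMono_id, fun i j => hM i j⟩
  have hcount : (copyCount A S : ℝ) = (hfin.toFinset.card : ℝ) := by
    rw [copyCount, himg,
      Set.ncard_image_of_injective _ (fun a b h => (Prod.ext_iff.mp h).1),
      Set.ncard_eq_toFinset_card Cset hfin]
  rw [hcount] at hK
  by_cases hden : (s : ℝ) * (n : ℝ) ^ (s - 1) = 0
  · exact ⟨∅, by simp, by simp, by rw [hden, div_zero]; simp⟩
  have hs0 : s ≠ 0 := by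
    rintro rfl; simp at hden
  obtain ⟨m, rfl⟩ := Nat.exists_eq_succ_of_ne_zero hs0
  -- key counting bound: copies meeting a fixed copy d
  have key : ∀ d : Fin (m + 1) → Fin n,
      (hfin.toFinset.filter
        (fun r => ¬ Disjoint (Set.range r) (Set.range d))).card ≤ (m + 1) * n ^ m := by
    intro d
    set idx : (Fin (m + 1) → Fin n) → Fin (m + 1) × Fin (m + 1) := fun r =>
      if h : ∃ p : Fin (m + 1) × Fin (m + 1), r p.1 = d p.2 then h.choose else ⟨0, 0⟩
      with hidxdef
    have hidx_spec : ∀ r, ¬ Disjoint (Set.range r) (Set.range d) →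
        r (idx r).1 = d (idx r).2 := by
      intro r hr
      obtain ⟨x, ⟨i, hi⟩, ⟨j, hj⟩⟩ := Set.not_disjoint_iff.mp hr
      have h : ∃ p : Fin (m + 1) × Fin (m + 1), r p.1 = d p.2 := ⟨⟨i, j⟩, by rw [hi, hj]⟩
      simp only [hidxdef, dif_pos h]
      exact h.choose_spec
    set φ : (Fin (m + 1) → Fin n) → Fin (m + 1) × (Fin m → Fin n) :=
      fun r => ((idx r).2, r ∘ (Fin.succAbove (idx r).1)) with hφdef
    have hrange : ∀ (r : Fin (m + 1) → Fin n) (i : Fin (m + 1)),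
        Set.range r = Set.range (r ∘ i.succAbove) ∪ {r i} := by
      intro r i
      ext x
      simp only [Set.mem_union, Set.mem_range, Set.mem_singleton_iff, Function.comp]
      constructor
      · rintro ⟨k, rfl⟩
        rcases eq_or_ne i k with rfl | hk
        · exact Or.inr rfl
        · obtain ⟨l, hl⟩ := Fin.exists_succAbove_eq (Ne.symm hk)
          exact Or.inl ⟨l, by rw [hl]⟩
      · rintro (⟨l, rfl⟩ | rfl)
        · exact ⟨_, rfl⟩
        · exact ⟨i, rfl⟩
    have hinj : Set.InjOn φ
        ↑(hfin.toFinset.filter (fun r => ¬ Disjoint (Set.range r) (Set.range d))) := by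
      intro r hr r' hr' heq
      simp only [Finset.coe_filter, Set.mem_setOf_eq, Set.Finite.mem_toFinset] at hr hr'
      have h1 := hidx_spec r hr.2
      have h2 := hidx_spec r' hr'.2
      have hj : (idx r).2 = (idx r').2 := congrArg Prod.fst heq
      have hg : r ∘ (Fin.succAbove (idx r).1) = r' ∘ (Fin.succAbove (idx r').1) :=
        congrArg Prod.snd heq
      have hrr : Set.range r = Set.range r' := by
        rw [hrange r (idx r).1, hrange r' (idx r').1, hg, h1, h2, hj]
      exact Set.range_injOn_strictMono hr.1.1 hr'.1.1 hrr
    calc (hfin.toFinset.filter (fun r => ¬ Disjoint (Set.range r) (Set.range d))).card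
        ≤ (Finset.univ : Finset (Fin (m + 1) × (Fin m → Fin n))).card :=
          Finset.card_le_card_of_injOn φ (fun _ _ => Finset.mem_univ _) hinj
      _ = (m + 1) * n ^ m := by
          simp [Finset.card_univ, Fintype.card_prod, Fintype.card_fun]
  -- choose a maximum pairwise-disjoint family
  obtain ⟨D, hDmem, hDmax⟩ := Finset.exists_max_image
    (hfin.toFinset.powerset.filter fun E : Finset (Fin (m + 1) → Fin n) =>
      (E : Set (Fin (m + 1) → Fin n)).Pairwise
        fun r r' => Disjoint (Set.range r) (Set.range r'))
    (fun E => E.card) ⟨∅, by simp⟩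
  rw [Finset.mem_filter, Finset.mem_powerset] at hDmem
  obtain ⟨hDsub, hDpair⟩ := hDmem
  -- every copy meets some member of D
  have hcover : hfin.toFinset ⊆ D.biUnion
      (fun d => hfin.toFinset.filter (fun r => ¬ Disjoint (Set.range r) (Set.range d))) := by
    intro r hr
    by_contra hnot
    simp only [Finset.mem_biUnion, not_exists, Finset.mem_filter, not_and, not_not] at hnot
    have hdisj : ∀ d ∈ D, Disjoint (Set.range r) (Set.range d) :=
      fun d hd => hnot d hd hr
    have hrD : r ∉ D := by
      intro hrD
      have h := hdisj r hrD
      exact absurd h (Set.not_disjoint_iff.mpr ⟨r 0, ⟨0, rfl⟩, ⟨0, rfl⟩⟩)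
    have hins : insert r D ∈ hfin.toFinset.powerset.filter
        fun E : Finset (Fin (m + 1) → Fin n) =>
          (E : Set (Fin (m + 1) → Fin n)).Pairwise
            fun r r' => Disjoint (Set.range r) (Set.range r') := by
      rw [Finset.mem_filter, Finset.mem_powerset]
      refine ⟨Finset.insert_subset hr hDsub, ?_⟩
      rw [Finset.coe_insert, Set.pairwise_insert]
      refine ⟨hDpair, fun d hd _ => ⟨hdisj d hd, (hdisj d hd).symm⟩⟩
    have hle := hDmax _ hins
    rw [Finset.card_insert_of_notMem hrD] at hle
    omega
  have hcardC : hfin.toFinset.card ≤ D.card * ((m + 1) * n ^ m) := by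
    calc hfin.toFinset.card
        ≤ (D.biUnion (fun d => hfin.toFinset.filter
            (fun r => ¬ Disjoint (Set.range r) (Set.range d)))).card :=
          Finset.card_le_card hcover
      _ ≤ ∑ d ∈ D, (hfin.toFinset.filter
            (fun r => ¬ Disjoint (Set.range r) (Set.range d))).card :=
          Finset.card_biUnion_le
      _ ≤ D.card * ((m + 1) * n ^ m) := by
          have := Finset.sum_le_card_nsmul D _ _ (fun d _ => key d)
          simpa [smul_eq_mul] using this
  refine ⟨D, ?_, hDpair, ?_⟩
  · intro r hr
    exact hfin.mem_toFinset.mp (hDsub hr)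
  · have hpos : 0 < ((m + 1 : ℕ) : ℝ) * (n : ℝ) ^ (m + 1 - 1) :=
      lt_of_le_of_ne (by positivity) (Ne.symm hden)
    rw [div_le_iff₀ hpos]
    calc K ≤ (hfin.toFinset.card : ℝ) := hK
      _ ≤ (D.card : ℝ) * (((m + 1 : ℕ) : ℝ) * (n : ℝ) ^ (m + 1 - 1)) := by
          push_cast
          exact_mod_cast hcardC
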